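/- For every real number α with 0 ≤ α ≤ 1, the sequence a_L = ⌊αL⌋·(L−⌊αL⌋)·T(L−2)/(L·T(L)), defined for integers L ≥ 2, converges to α·(1−α) as L → ∞. (That is, the rescaled average Rényi-0 entanglement profile (1/L)·S̄_{αL}(L) = (1/L)·⌊αL⌋(L−⌊αL⌋)T(L−2)/T(L) of the critical stationary distribution converges to α(1−α) in the thermodynamic limit.) -/

import Mathlib

open Filter Real

def telephone : ℕ → ℕ
  | 0 => 1
  | 1 => 1
  | n + 2 => telephone (n + 1) + (n + 1) * telephone n

lemma tel_pos : ∀ n, 0 < telephone n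
  | 0 => one_pos
  | 1 => one_pos
  | n + 2 => by
    have h1 := tel_pos (n + 1)
    have h2 := tel_pos n
    simp only [telephone]; positivity

lemma one_le_sqrt' {x : ℝ} (h : 1 ≤ x) : 1 ≤ Real.sqrt x := by
  have := Real.sqrt_le_sqrt h
  simpa using this

lemma tel_bounds : ∀ n : ℕ,
    Real.sqrt ((n : ℝ) + 1) * telephone n ≤ telephone (n + 1) ∧
      (telephone (n + 1) : ℝ) ≤ (Real.sqrt ((n : ℝ) + 1) + 1) * telephone n := by
  intro n
  induction n with
  | zero => simp [telephone]
  | succ n ih =>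
    obtain ⟨hlo, hhi⟩ := ih
    have hcast : ((n + 1 : ℕ) : ℝ) + 1 = (n : ℝ) + 2 := by push_cast; ring
    rw [hcast]
    set x := Real.sqrt ((n : ℝ) + 1) with hxdef
    set y := Real.sqrt ((n : ℝ) + 2) with hydef
    have hn : (0 : ℝ) ≤ n := Nat.cast_nonneg n
    have hx1 : (1 : ℝ) ≤ x := one_le_sqrt' (by linarith)
    have hy1 : (1 : ℝ) ≤ y := one_le_sqrt' (by linarith)
    have hx2 : x ^ 2 = (n : ℝ) + 1 := by
      rw [hxdef, sq]; exact Real.mul_self_sqrt (by positivity)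
    have hy2 : y ^ 2 = (n : ℝ) + 2 := by
      rw [hydef, sq]; exact Real.mul_self_sqrt (by positivity)
    have htp : (0 : ℝ) < telephone n := by exact_mod_cast tel_pos n
    have htp1 : (0 : ℝ) < telephone (n + 1) := by exact_mod_cast tel_pos (n + 1)
    have hrec : (telephone (n + 2) : ℝ) = telephone (n + 1) + ((n : ℝ) + 1) * telephone n := by
      show ((telephone (n+1) + (n+1) * telephone n : ℕ) : ℝ) = _
      push_cast; ring
    constructor
    · rw [hrec]
      have key : y * (x + 1) ≤ x + ((n : ℝ) + 2) := by
        nlinarith [sq_nonneg (x - y), sq_nonneg (x + y - 1)]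
      nlinarith [mul_le_mul_of_nonneg_left hhi (le_of_lt (lt_of_lt_of_le one_pos hy1)),
        mul_pos htp (show (0:ℝ) < x + 1 by linarith)]
    · rw [hrec]
      have h1 : ((n : ℝ) + 1) * telephone n ≤ x * telephone (n + 1) := by
        nlinarith [mul_le_mul_of_nonneg_left hlo (le_of_lt (lt_of_lt_of_le one_pos hx1))]
      have h2 : x ≤ y := Real.sqrt_le_sqrt (by linarith)
      nlinarith

example : True := trivial


lemma tel_two_step (m : ℕ) :
    ((m : ℝ) + 1 + Real.sqrt ((m : ℝ) + 1)) * telephone m ≤ telephone (m + 2) ∧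
      (telephone (m + 2) : ℝ) ≤ ((m : ℝ) + 2 + Real.sqrt ((m : ℝ) + 1)) * telephone m := by
  obtain ⟨hlo, hhi⟩ := tel_bounds m
  have hrec : (telephone (m + 2) : ℝ) = telephone (m + 1) + ((m : ℝ) + 1) * telephone m := by
    show ((telephone (m+1) + (m+1) * telephone m : ℕ) : ℝ) = _
    push_cast; ring
  constructor
  · rw [hrec]; linarith
  · rw [hrec]; linarith

lemma sqrt_nat_atTop : Filter.Tendsto (fun L : ℕ => Real.sqrt L) Filter.atTop Filter.atTop := by
  apply Filter.tendsto_atTop_atTop.2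
  intro b
  refine ⟨⌈b⌉₊ ^ 2, fun L hL => ?_⟩
  calc b ≤ (⌈b⌉₊ : ℝ) := Nat.le_ceil b
    _ = Real.sqrt ((⌈b⌉₊ : ℝ) ^ 2) := (Real.sqrt_sq (Nat.cast_nonneg _)).symm
    _ ≤ Real.sqrt L := Real.sqrt_le_sqrt (by exact_mod_cast hL)

lemma sqrt_div_tendsto :
    Filter.Tendsto (fun L : ℕ => Real.sqrt ((L : ℝ) - 1) / L) Filter.atTop (nhds 0) := by
  have h1 : Filter.Tendsto (fun L : ℕ => (Real.sqrt (L : ℝ))⁻¹) Filter.atTop (nhds 0) :=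
    tendsto_inv_atTop_zero.comp sqrt_nat_atTop
  apply tendsto_of_tendsto_of_tendsto_of_le_of_le' tendsto_const_nhds h1
  · filter_upwards with L
    positivity
  · filter_upwards [Filter.eventually_ge_atTop 1] with L hL
    have hL1 : (1 : ℝ) ≤ (L : ℝ) := by exact_mod_cast hL
    have hs : Real.sqrt ((L : ℝ) - 1) ≤ Real.sqrt (L : ℝ) := Real.sqrt_le_sqrt (by linarith)
    have hss : Real.sqrt (L : ℝ) * Real.sqrt (L : ℝ) = (L : ℝ) := Real.mul_self_sqrt (by linarith)
    have hsp : (0 : ℝ) < Real.sqrt (L : ℝ) := Real.sqrt_pos.mpr (by linarith)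
    have h3 : (Real.sqrt (L : ℝ))⁻¹ * L = Real.sqrt (L : ℝ) := by
      field_simp
      rw [sq, hss]
    rw [div_le_iff₀ (by linarith : (0:ℝ) < (L:ℝ)), h3]
    exact hs

lemma ratio_tendsto_one :
    Filter.Tendsto (fun L : ℕ => (L : ℝ) * telephone (L - 2) / telephone L)
      Filter.atTop (nhds 1) := by
  have hA := sqrt_div_tendsto
  have hB : Filter.Tendsto (fun L : ℕ => ((L : ℝ) - 1) / L) Filter.atTop (nhds 1) := by
    have h1 : Filter.Tendsto (fun L : ℕ => 1 - 1 / (L : ℝ)) Filter.atTop (nhds (1 - 0)) :=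
      tendsto_const_nhds.sub tendsto_one_div_atTop_nhds_zero_nat
    rw [sub_zero] at h1
    apply h1.congr'
    filter_upwards [Filter.eventually_ge_atTop 1] with L hL
    have hL0 : (0 : ℝ) < (L : ℝ) := by exact_mod_cast hL
    field_simp
  have hlow : Filter.Tendsto (fun L : ℕ => (L : ℝ) / ((L : ℝ) + Real.sqrt ((L : ℝ) - 1)))
      Filter.atTop (nhds 1) := by
    have h1 : Filter.Tendsto (fun L : ℕ => (1 + Real.sqrt ((L : ℝ) - 1) / L)⁻¹)
        Filter.atTop (nhds 1) := by
      have := ((tendsto_const_nhds.add hA).inv₀ (by norm_num) :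
        Filter.Tendsto (fun L : ℕ => (1 + Real.sqrt ((L : ℝ) - 1) / L)⁻¹) Filter.atTop
          (nhds (1 + 0)⁻¹))
      simpa using this
    apply h1.congr'
    filter_upwards [Filter.eventually_ge_atTop 1] with L hL
    have hL0 : (0 : ℝ) < (L : ℝ) := by exact_mod_cast hL
    have he : (1 : ℝ) + Real.sqrt ((L : ℝ) - 1) / L = ((L : ℝ) + Real.sqrt ((L : ℝ) - 1)) / L := by
      field_simp
    rw [he, inv_div]
  have hup : Filter.Tendsto
      (fun L : ℕ => (L : ℝ) / ((L : ℝ) - 1 + Real.sqrt ((L : ℝ) - 1)))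
      Filter.atTop (nhds 1) := by
    have h1 : Filter.Tendsto
        (fun L : ℕ => (((L : ℝ) - 1) / L + Real.sqrt ((L : ℝ) - 1) / L)⁻¹)
        Filter.atTop (nhds 1) := by
      have := ((hB.add hA).inv₀ (by norm_num) :
        Filter.Tendsto (fun L : ℕ => (((L : ℝ) - 1) / L + Real.sqrt ((L : ℝ) - 1) / L)⁻¹)
          Filter.atTop (nhds (1 + 0)⁻¹))
      simpa using this
    apply h1.congr'
    filter_upwards with L
    rw [← add_div, inv_div]
  apply tendsto_of_tendsto_of_tendsto_of_le_of_le' hlow hup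
  · -- lower: L/(L+√(L-1)) ≤ L T(L-2)/T(L)
    filter_upwards [Filter.eventually_ge_atTop 2] with L hL
    obtain ⟨m, rfl⟩ : ∃ m, L = m + 2 := ⟨L - 2, by omega⟩
    obtain ⟨hlo2, hhi2⟩ := tel_two_step m
    have hc : ((m + 2 : ℕ) : ℝ) - 1 = (m : ℝ) + 1 := by push_cast; ring
    have hc2 : ((m + 2 : ℕ) : ℝ) = (m : ℝ) + 2 := by push_cast; ring
    have htm : (0 : ℝ) < telephone m := by exact_mod_cast tel_pos m
    have htm2 : (0 : ℝ) < telephone (m + 2) := by exact_mod_cast tel_pos (m + 2)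
    have hs : (0 : ℝ) ≤ Real.sqrt ((m : ℝ) + 1) := Real.sqrt_nonneg _
    simp only [hc, hc2, Nat.add_sub_cancel]
    rw [show (m : ℝ) + 2 - 1 = (m : ℝ) + 1 from by ring]
    rw [div_le_div_iff₀ (by positivity) htm2]
    nlinarith
  · filter_upwards [Filter.eventually_ge_atTop 2] with L hL
    obtain ⟨m, rfl⟩ : ∃ m, L = m + 2 := ⟨L - 2, by omega⟩
    obtain ⟨hlo2, hhi2⟩ := tel_two_step m
    have hc : ((m + 2 : ℕ) : ℝ) - 1 = (m : ℝ) + 1 := by push_cast; ring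
    have hc2 : ((m + 2 : ℕ) : ℝ) = (m : ℝ) + 2 := by push_cast; ring
    have htm : (0 : ℝ) < telephone m := by exact_mod_cast tel_pos m
    have htm2 : (0 : ℝ) < telephone (m + 2) := by exact_mod_cast tel_pos (m + 2)
    have hm0 : (0 : ℝ) ≤ (m : ℝ) := Nat.cast_nonneg m
    have hs1 : (1 : ℝ) ≤ Real.sqrt ((m : ℝ) + 1) := by
      have := Real.sqrt_le_sqrt (show (1:ℝ) ≤ (m:ℝ) + 1 by linarith)
      simpa using this
    simp only [hc, hc2, Nat.add_sub_cancel]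
    rw [show (m : ℝ) + 2 - 1 = (m : ℝ) + 1 from by ring]
    rw [div_le_div_iff₀ htm2 (by nlinarith)]
    nlinarith

/-- For `0 ≤ α ≤ 1`, the rescaled average Rényi-0 entanglement profile
`⌊αL⌋ (L - ⌊αL⌋) T(L-2) / (L T(L))` converges to `α (1 - α)` as `L → ∞`. -/
theorem tendsto_rescaled_profile (α : ℝ) (h0 : 0 ≤ α) (h1 : α ≤ 1) :
    Filter.Tendsto
      (fun L : ℕ =>
        ((⌊α * L⌋₊ : ℝ) * ((L : ℝ) - (⌊α * L⌋₊ : ℝ)) * (telephone (L - 2) : ℝ)) /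
          ((L : ℝ) * (telephone L : ℝ)))
      Filter.atTop (nhds (α * (1 - α))) := by
  have hF : Filter.Tendsto (fun L : ℕ => (⌊α * (L : ℝ)⌋₊ : ℝ) / L) Filter.atTop (nhds α) :=
    (tendsto_nat_floor_mul_div_atTop h0).comp tendsto_natCast_atTop_atTop
  have hG : Filter.Tendsto (fun L : ℕ => ((L : ℝ) - (⌊α * (L : ℝ)⌋₊ : ℝ)) / L)
      Filter.atTop (nhds (1 - α)) := by
    have h1' : Filter.Tendsto (fun L : ℕ => 1 - (⌊α * (L : ℝ)⌋₊ : ℝ) / L)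
        Filter.atTop (nhds (1 - α)) := tendsto_const_nhds.sub hF
    apply h1'.congr'
    filter_upwards [Filter.eventually_ge_atTop 1] with L hL
    have hL0 : (0 : ℝ) < (L : ℝ) := by exact_mod_cast hL
    rw [sub_div, div_self (ne_of_gt hL0)]
  have hfull := (hF.mul hG).mul ratio_tendsto_one
  rw [mul_one] at hfull
  apply hfull.congr'
  filter_upwards [Filter.eventually_ge_atTop 2] with L hL
  have hL0 : (0 : ℝ) < (L : ℝ) := by
    have : 0 < L := by omega
    exact_mod_cast this
  have hT : (0 : ℝ) < (telephone L : ℝ) := by exact_mod_cast tel_pos L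
  field_simp
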